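/- For every λ ∈ ℝ, every t > 0 and every measurable function h : ℝ → [0, ∞), one has ∫_ℝ e^{−2λx} ( ∫_ℝ h(y) dν_x(y) ) dx = ∫_ℝ h(y) e^{−2λy} dy, where ν_x denotes the Gaussian probability measure on ℝ with mean x − λt and variance t. In other words, the measure e^{−2λx} dx is invariant under convolution with the law of B_t − λt, for B a standard Brownian motion. -/

import Mathlib

open MeasureTheory ProbabilityTheory Real ENNReal

lemma gauss_exp_symm (lam t x y : ℝ) (ht : 0 < t) :
    Real.exp (-2 * lam * x) * gaussianPDFReal (x - lam * t) t.toNNReal y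
      = Real.exp (-2 * lam * y) * gaussianPDFReal (y - lam * t) t.toNNReal x := by
  have htc : ((t.toNNReal : ℝ)) = t := Real.coe_toNNReal t ht.le
  simp only [gaussianPDFReal, htc, ← Real.exp_add]
  rw [mul_left_comm, mul_left_comm (Real.exp (-2 * lam * y))]
  congr 1
  rw [← Real.exp_add, ← Real.exp_add]
  congr 1
  field_simp
  ring

/-- The measure `e^{-2λx} dx` is invariant under convolution with the law of `B_t - λt`:
for every measurable `h : ℝ → [0, ∞]`,
`∫ e^{-2λx} (∫ h dν_x) dx = ∫ h(y) e^{-2λy} dy`, where `ν_x = gaussianReal (x - λt) t`. -/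
theorem exp_measure_invariant (lam t : ℝ) (ht : 0 < t) (h : ℝ → ℝ≥0∞) (hh : Measurable h) :
    ∫⁻ x, ENNReal.ofReal (Real.exp (-2 * lam * x))
        * (∫⁻ y, h y ∂(gaussianReal (x - lam * t) t.toNNReal))
      = ∫⁻ y, h y * ENNReal.ofReal (Real.exp (-2 * lam * y)) := by
  have htn : t.toNNReal ≠ 0 := by
    simp [Real.toNNReal_eq_zero, not_le, ht]
  have hpdf : ∀ m : ℝ, ∀ y : ℝ, gaussianPDF m t.toNNReal y
      = ENNReal.ofReal (gaussianPDFReal m t.toNNReal y) := fun _ _ => rfl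
  -- joint measurability of the pdf
  have hjm : Measurable (fun p : ℝ × ℝ => gaussianPDF (p.1 - lam * t) t.toNNReal p.2) := by
    simp only [gaussianPDF, gaussianPDFReal]
    fun_prop
  calc ∫⁻ x, ENNReal.ofReal (Real.exp (-2 * lam * x))
        * (∫⁻ y, h y ∂(gaussianReal (x - lam * t) t.toNNReal))
      = ∫⁻ x, ∫⁻ y, ENNReal.ofReal (Real.exp (-2 * lam * x))
          * (gaussianPDF (x - lam * t) t.toNNReal y * h y) := by
        refine lintegral_congr fun x => ?_
        rw [gaussianReal_of_var_ne_zero _ htn,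
          lintegral_withDensity_eq_lintegral_mul _ (measurable_gaussianPDF _ _) hh]
        simp only [Pi.mul_apply]
        rw [← lintegral_const_mul (f := fun a => gaussianPDF (x - lam * t) t.toNNReal a * h a) _
          ((measurable_gaussianPDF _ _).mul hh :
          Measurable fun a => gaussianPDF (x - lam * t) t.toNNReal a * h a)]
    _ = ∫⁻ y, ∫⁻ x, ENNReal.ofReal (Real.exp (-2 * lam * x))
          * (gaussianPDF (x - lam * t) t.toNNReal y * h y) := by
        rw [lintegral_lintegral_swap]
        apply Measurable.aemeasurable
        fun_prop
    _ = ∫⁻ y, h y * ENNReal.ofReal (Real.exp (-2 * lam * y))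
          * ∫⁻ x, gaussianPDF (y - lam * t) t.toNNReal x := by
        refine lintegral_congr fun y => ?_
        rw [← lintegral_const_mul _ (measurable_gaussianPDF _ _)]
        refine lintegral_congr fun x => ?_
        have key : ENNReal.ofReal (Real.exp (-2 * lam * x))
            * gaussianPDF (x - lam * t) t.toNNReal y
            = ENNReal.ofReal (Real.exp (-2 * lam * y))
              * gaussianPDF (y - lam * t) t.toNNReal x := by
          rw [hpdf, hpdf, ← ENNReal.ofReal_mul (Real.exp_nonneg _),
            gauss_exp_symm lam t x y ht, ENNReal.ofReal_mul (Real.exp_nonneg _)]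
        calc ENNReal.ofReal (Real.exp (-2 * lam * x))
              * (gaussianPDF (x - lam * t) t.toNNReal y * h y)
            = ENNReal.ofReal (Real.exp (-2 * lam * x))
              * gaussianPDF (x - lam * t) t.toNNReal y * h y := by ring
          _ = _ := by rw [key]; ring
    _ = ∫⁻ y, h y * ENNReal.ofReal (Real.exp (-2 * lam * y)) := by
        refine lintegral_congr fun y => ?_
        rw [lintegral_gaussianPDF_eq_one _ htn, mul_one]
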